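/- Let G be an infinite discrete c-regular cyclically ordered abelian group and p a prime. The following conditions are equivalent: (1) G is p-divisible; (2) the least positive element 1_G is divisible by p in G; (3) the unique k ∈ {0,…,p−1} for which D_{p,k} holds in G is nonzero; (4) G contains no element of order p. -/

import Mathlib

section CyclicOrder

variable {G : Type*}

/-- A compatible cyclic order on an abelian group. -/
structure IsCyclicOrder [AddCommGroup G] (R : G → G → G → Prop) : Prop where
  strict : ∀ a b c : G, R a b c → a ≠ b ∧ b ≠ c ∧ c ≠ a
  cyc : ∀ a b c : G, R a b c → R b c a
  asymm : ∀ a b c : G, R a b c → ¬ R a c b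
  trans' : ∀ a b c d : G, R a b c → R a c d → R a b d
  total : ∀ a b c : G, a ≠ b → b ≠ c → c ≠ a → R a b c ∨ R a c b
  compat : ∀ a b c d : G, R a b c → R (a + d) (b + d) (c + d)

/-- `RChain R m y` expresses `R (y 0, y 1, …, y (m-1))`, i.e.
`R (y i) (y (i+1)) (y (m-1))` for all `i ≤ m - 3`. -/
def RChain (R : G → G → G → Prop) (m : ℕ) (y : ℕ → G) : Prop :=
  ∀ i : ℕ, i + 3 ≤ m → R (y i) (y (i + 1)) (y (m - 1))

/-- `G` is `n`-regular. -/
def NRegularC [AddCommGroup G] (R : G → G → G → Prop) (n : ℕ) : Prop :=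
  ∀ x : ℕ → G,
    RChain R (n + 2) (fun i => if i = 0 then 0 else if i = n + 1 then -(x n) else x i) →
    ∃ g : G, (R (x 1) (n • g) (x n) ∨ n • g = x 1 ∨ n • g = x n) ∧
      RChain R (n + 1) (fun i => if i = n then x n else i • g)

/-- `G` is c-`n`-regular. -/
def CNRegular [AddCommGroup G] (R : G → G → G → Prop) (n : ℕ) : Prop :=
  ∀ x : ℕ → G,
    RChain R (n + 1) (fun i => if i = 0 then 0 else x i) →
    ∃ g : G, (n • g = x 1 ∨ n • g = x n ∨ R (x 1) (n • g) (x n)) ∧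
      RChain R (n + 1) (fun i => if i = n then x n else i • g)

open Classical in
/-- Addition on the unwound `ℤ × G` of `(G, R)`. -/
noncomputable def uwAdd [AddCommGroup G] (R : G → G → G → Prop) (p q : ℤ × G) : ℤ × G :=
  if p.2 = 0 ∨ q.2 = 0 ∨ R 0 p.2 (p.2 + q.2) then (p.1 + q.1, p.2 + q.2)
  else (p.1 + q.1 + 1, p.2 + q.2)

open Classical in
/-- Negation on the unwound. -/
noncomputable def uwNeg [AddCommGroup G] (p : ℤ × G) : ℤ × G :=
  if p.2 = 0 then (-p.1, 0) else (-p.1 - 1, -p.2)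

/-- The order on the unwound. -/
def uwLt [AddCommGroup G] (R : G → G → G → Prop) (p q : ℤ × G) : Prop :=
  p.1 < q.1 ∨ (p.1 = q.1 ∧ R 0 p.2 q.2) ∨ (p.1 = q.1 ∧ p.2 = 0 ∧ q.2 ≠ 0)

/-- Natural scalar multiplication on the unwound. -/
noncomputable def uwNsmul [AddCommGroup G] (R : G → G → G → Prop) : ℕ → ℤ × G → ℤ × G
  | 0, _ => (0, 0)
  | n + 1, x => uwAdd R (uwNsmul R n x) x

open Classical in
/-- Integer scalar multiplication on the unwound. -/
noncomputable def uwZsmul [AddCommGroup G] (R : G → G → G → Prop) (n : ℤ) (x : ℤ × G) :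
    ℤ × G :=
  if 0 ≤ n then uwNsmul R n.toNat x else uwNeg (uwNsmul R (-n).toNat x)

/-- The linear part `l(G)` of `(G, R)`. -/
def lpart [AddCommGroup G] (R : G → G → G → Prop) : Set G :=
  {x : G | ∀ n : ℤ, uwLt R (uwZsmul R n ((0 : ℤ), x)) ((1 : ℤ), (0 : G))}

/-- The linear order on the linear part: `x < y` iff `R 0 (y - x) (-(y-x))`. -/
def lLt [AddCommGroup G] (R : G → G → G → Prop) (x y : G) : Prop :=
  R 0 (y - x) (x - y)

/-- `l(G)` is an `n`-regular linearly ordered group. -/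
def lpartNRegular [AddCommGroup G] (R : G → G → G → Prop) (n : ℕ) : Prop :=
  ∀ x : ℕ → G, (∀ i : ℕ, i < n → x i ∈ lpart R) →
    (∀ i : ℕ, i + 1 < n → lLt R (x i) (x (i + 1))) →
    ∃ g ∈ lpart R, (lLt R (x 0) (n • g) ∨ x 0 = n • g) ∧
      (lLt R (n • g) (x (n - 1)) ∨ n • g = x (n - 1))

/-- The unwound is an `n`-regular linearly ordered group. -/
def uwNRegular [AddCommGroup G] (R : G → G → G → Prop) (n : ℕ) : Prop :=
  ∀ x : ℕ → ℤ × G, (∀ i : ℕ, i + 1 < n → uwLt R (x i) (x (i + 1))) →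
    ∃ g : ℤ × G, (uwLt R (x 0) (uwNsmul R n g) ∨ x 0 = uwNsmul R n g) ∧
      (uwLt R (uwNsmul R n g) (x (n - 1)) ∨ uwNsmul R n g = x (n - 1))

/-- `K(G) = G/l(G)` contains a primitive `n`-th root of `1`,
i.e. an element of order exactly `n`. -/
def KPrimitiveRoot [AddCommGroup G] (R : G → G → G → Prop) (n : ℕ) : Prop :=
  ∃ x : G, n • x ∈ lpart R ∧ ∀ k : ℕ, 0 < k → k < n → k • x ∉ lpart R

/-- `K(G) = G/l(G)` is `n`-divisible. -/
def KDivisibleBy [AddCommGroup G] (R : G → G → G → Prop) (n : ℕ) : Prop :=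
  ∀ x : G, ∃ y : G, x - n • y ∈ lpart R

end CyclicOrder

section Discrete

variable {G : Type*}

/-- The linear order at `0` associated with the cyclic order `R`. -/
def cprec [AddCommGroup G] (R : G → G → G → Prop) (x y : G) : Prop :=
  (x = 0 ∧ y ≠ 0) ∨ R 0 x y

/-- `(G, R)` is discrete, with least positive element `e`. -/
def IsDiscreteCyc [AddCommGroup G] (R : G → G → G → Prop) (e : G) : Prop :=
  e ≠ 0 ∧ ∀ x : G, x ≠ 0 → x = e ∨ cprec R e x

/-- The formula `D_{q,k}`: there is `x` with `R(0, x, 2x, …, (q-1)x)` and `q x = k e`. -/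
def Dform [AddCommGroup G] (R : G → G → G → Prop) (e : G) (q k : ℕ) : Prop :=
  ∃ x : G, RChain R q (fun i => i • x) ∧ q • x = k • e

end Discrete

section Lemmas
set_option linter.unusedSectionVars false

variable {G : Type*} [AddCommGroup G] {R : G → G → G → Prop} {e : G}

namespace IsCyclicOrder

variable (h : IsCyclicOrder R)
include h

lemma ne01 {x y : G} (hxy : R 0 x y) : x ≠ 0 := fun hx => by
  obtain ⟨h1, _, _⟩ := h.strict _ _ _ hxy; exact h1 hx.symm

lemma ne02 {x y : G} (hxy : R 0 x y) : y ≠ 0 := fun hy => by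
  obtain ⟨_, _, h3⟩ := h.strict _ _ _ hxy; exact h3 hy

lemma ne12 {x y : G} (hxy : R 0 x y) : x ≠ y := fun hxy' => by
  obtain ⟨_, h2, _⟩ := h.strict _ _ _ hxy; exact h2 hxy'

lemma irrefl0 {x : G} (hx : R 0 x x) : False := h.ne12 hx rfl

lemma trans0 {x y z : G} (h1 : R 0 x y) (h2 : R 0 y z) : R 0 x z :=
  h.trans' 0 x y z h1 h2

lemma asymm0 {x y : G} (h1 : R 0 x y) (h2 : R 0 y x) : False :=
  h.asymm 0 x y h1 h2

lemma total0 {x y : G} (hx : x ≠ 0) (hy : y ≠ 0) (hxy : x ≠ y) :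
    R 0 x y ∨ R 0 y x :=
  h.total 0 x y (Ne.symm hx) hxy hy

lemma congr3 {a b c a' b' c' : G} (hr : R a b c) (ha : a = a') (hb : b = b')
    (hc : c = c') : R a' b' c' := ha ▸ hb ▸ hc ▸ hr

/-- translation of a triple, with rewriting. -/
lemma shift {a b c : G} (d : G) (hr : R a b c) {a' b' c' : G}
    (ha : a + d = a') (hb : b + d = b') (hc : c + d = c') : R a' b' c' :=
  h.congr3 (h.compat a b c d hr) ha hb hc

/-- `ρ`-move: `x ⊏ y → (y - x) ⊏ (-x)`. -/
lemma rho {x y : G} (hxy : R 0 x y) : R 0 (y - x) (-x) :=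
  h.shift (-x) (h.cyc _ _ _ hxy) (by abel) (by abel) (by abel)

/-- `R 0 a b → R 0 b c → R a b c`. -/
lemma transR {a b c : G} (h1 : R 0 a b) (h2 : R 0 b c) : R a b c := by
  have hb0 : R b c 0 := h.cyc _ _ _ h2
  have hab0 : R a b 0 := h.cyc _ _ _ h1
  have hb0a : R b 0 a := h.cyc _ _ _ hab0
  have : R b c a := h.trans' b c 0 a hb0 hb0a
  exact h.cyc _ _ _ (h.cyc _ _ _ this)

/-- interval splitting: `0 ⊏ a ⊏ L` and `b ∈ (a, L)` gives `a ⊏ b ⊏ L`. -/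
lemma split {a b L : G} (haL : R 0 a L) (habL : R a b L) :
    R 0 a b ∧ R 0 b L := by
  constructor
  · have haL0 : R a L 0 := h.cyc _ _ _ haL
    have : R a b 0 := h.trans' a b L 0 habL haL0
    exact h.cyc _ _ _ (h.cyc _ _ _ this)
  · have hL0a : R L 0 a := h.cyc _ _ _ (h.cyc _ _ _ haL)
    have hLab : R L a b := h.cyc _ _ _ (h.cyc _ _ _ habL)
    have : R L 0 b := h.trans' L 0 a b hL0a hLab
    exact h.cyc _ _ _ this

/-- negation reverses the order at `0`. -/
lemma neg0 {x y : G} (hxy : R 0 x y) : R 0 (-y) (-x) := by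
  by_contra hA
  have hx0 := h.ne01 hxy
  have hy0 := h.ne02 hxy
  have hne : (-y : G) ≠ -x := fun hh => h.ne12 hxy (neg_injective hh).symm
  have hA' : R 0 (-x) (-y) := by
    rcases h.total0 (neg_ne_zero.mpr hy0) (neg_ne_zero.mpr hx0) hne with t | t
    · exact absurd t hA
    · exact t
  have B1 : R 0 (y - x) (-x) := h.rho hxy
  have A1 : R 0 (x - y) x := h.congr3 (h.rho hA') (by abel) (by abel) (by abel)
  have A2 : R 0 y (y - x) := h.congr3 (h.rho A1) (by abel) (by abel) (by abel)
  have B2 : R 0 (-y) (x - y) := h.congr3 (h.rho B1) (by abel) (by abel) (by abel)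
  have C2 : R 0 y (-x) := h.trans0 A2 B1
  have C3 : R 0 y (-y) := h.trans0 C2 hA'
  have C1 : R 0 (-y) x := h.trans0 B2 A1
  exact h.asymm0 hxy (h.trans0 C3 C1)

/-- no-wrap: `a ⊏ -b` implies `a ⊏ a + b`. -/
lemma nowrap {a b : G} (hab : R 0 a (-b)) (hb : b ≠ 0) : R 0 a (a + b) := by
  have ha0 : a ≠ 0 := h.ne01 hab
  have hanb : a ≠ -b := h.ne12 hab
  have hab0 : a + b ≠ 0 := fun hh => hanb (eq_neg_of_add_eq_zero_left hh)
  have hne : a ≠ a + b := fun hh => hb (add_eq_left.mp hh.symm)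
  rcases h.total0 ha0 hab0 hne with t | t
  · exact t
  exfalso
  have m1 : R 0 (-(a + b)) (-a) := h.congr3 (h.rho hab) (by abel) (by abel) (by abel)
  have m2 : R 0 b (a + b) := h.congr3 (h.rho m1) (by abel) (by abel) (by abel)
  have m3 : R 0 (-b) (-(a + b)) := h.congr3 (h.rho t) (by abel) (by abel) (by abel)
  have m4 : R 0 (-a) b := h.congr3 (h.rho m3) (by abel) (by abel) (by abel)
  exact h.irrefl0 (h.trans0 (h.trans0 (h.trans0 (h.trans0 (h.trans0 hab m3) m1) m4) m2) t)

end IsCyclicOrder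

end Lemmas

section DiscLemmas
set_option linter.unusedSectionVars false
set_option maxHeartbeats 1000000

variable {G : Type*} [AddCommGroup G] {R : G → G → G → Prop} {e : G}
variable (h : IsCyclicOrder R) (hd : IsDiscreteCyc R e)
include h hd

/-- nothing strictly between `0` and `e`. -/
lemma noelt (x : G) : ¬ R 0 x e := by
  intro hx
  have hx0 : x ≠ 0 := h.ne01 hx
  have hxe : x ≠ e := h.ne12 hx
  rcases hd.2 x hx0 with rfl | hcp
  · exact hxe rfl
  · rcases hcp with ⟨he0, _⟩ | hR
    · exact hd.1 he0
    · exact h.asymm0 hx hR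

/-- nothing strictly between `a` and `a + e`. -/
lemma nogap (a x : G) : ¬ R a x (a + e) := by
  intro hx
  exact noelt h hd (x - a) (h.shift (-a) hx (by abel) (by abel) (by abel))

/-- adding `e` never wraps. -/
lemma addE {a : G} (ha : a ≠ 0) (hae : a + e ≠ 0) : R 0 a (a + e) := by
  have hne : a ≠ a + e := fun hh => hd.1 (add_eq_left.mp hh.symm)
  rcases h.total0 ha hae hne with t | t
  · exact t
  exfalso
  have t1 : R e 0 (-a) := h.shift (-a) (h.cyc _ _ _ t) (by abel) (by abel) (by abel)
  exact noelt h hd (-a) (h.cyc _ _ _ t1)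

/-- multiples of `e` are nonzero (uses infiniteness). -/
lemma epos (hinf : Infinite G) : ∀ n : ℕ, 1 ≤ n → n • e ≠ 0 := by
  by_contra hcon
  push_neg at hcon
  obtain ⟨n, hn1, hn0⟩ := hcon
  have hex : ∃ m, 1 ≤ m ∧ m • e = 0 := ⟨n, hn1, hn0⟩
  classical
  obtain ⟨hm1, hme⟩ := Nat.find_spec hex
  have hmin : ∀ j, 1 ≤ j → j < Nat.find hex → j • e ≠ 0 := fun j h1 h2 hj0 =>
    Nat.find_min hex h2 ⟨h1, hj0⟩
  set m := Nat.find hex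
  have hm2 : 2 ≤ m := by
    by_contra hlt
    have : m = 1 := by omega
    rw [this, one_smul] at hme
    exact hd.1 hme
  -- every element is a multiple of e
  have hsurj : ∀ x : G, ∃ i, i < m ∧ x = i • e := by
    intro x
    by_contra hx
    push_neg at hx
    have hx0 : x ≠ 0 := by
      intro h0
      exact hx 0 (by omega) (by rw [h0, zero_smul])
    have hclaim : ∀ i, 1 ≤ i → i < m → R 0 (i • e) x := by
      intro i
      induction i with
      | zero => omega
      | succ j ih =>
        intro hi1 hjm
        by_cases hj0 : j = 0
        · subst hj0
          have hxe : x ≠ 1 • e := hx 1 (by omega)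
          have he0 : (1:ℕ) • e ≠ 0 := by rw [one_smul]; exact hd.1
          rcases h.total0 hx0 he0 hxe with t | t
          · exact absurd (by rw [one_smul] at t; exact t) (noelt h hd x)
          · exact t
        · have hj1 : 1 ≤ j := by omega
          have hjm' : j < m := by omega
          have hprev : R 0 (j • e) x := ih hj1 hjm'
          have hne' : x ≠ (j+1) • e := hx (j+1) hjm
          rcases h.total0 hx0 (hmin (j+1) (by omega) hjm) hne' with t | t
          · exact absurd (h.congr3 (h.transR hprev t) rfl rfl (by rw [succ_nsmul]))
              (nogap h hd (j • e) x)
          · exact t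
    obtain ⟨M, hM⟩ : ∃ M, m = M + 1 := ⟨m - 1, by omega⟩
    have hM1 : 1 ≤ M := by omega
    have hlast : R 0 (M • e) x := hclaim M hM1 (by omega)
    have hbad : R (M • e) x (M • e + e) := by
      have h0 : M • e + e = 0 := by
        rw [← succ_nsmul, ← hM]; exact hme
      rw [h0]
      exact h.cyc _ _ _ hlast
    exact nogap h hd (M • e) x hbad
  -- contradiction with infiniteness
  haveI := hinf
  haveI : Finite G := by
    have hs : Function.Surjective (fun i : Fin m => (i : ℕ) • e) := by
      intro x
      obtain ⟨i, him, hi⟩ := hsurj x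
      exact ⟨⟨i, him⟩, hi.symm⟩
    exact Finite.of_surjective _ hs
  exact not_finite G

/-- cancellation for multiples of `e`. -/
lemma ecancel (hinf : Infinite G) {a b : ℕ} (hab : a • e = b • e) : a = b := by
  rcases Nat.lt_trichotomy a b with hlt | heq | hlt
  · exfalso
    obtain ⟨d, hd1, rfl⟩ : ∃ d, 1 ≤ d ∧ b = a + d := ⟨b - a, by omega, by omega⟩
    rw [add_smul] at hab
    have h0 : d • e = 0 := by
      have := hab.symm
      rwa [add_eq_left] at this
    exact epos h hd hinf d hd1 h0
  · exact heq
  · exfalso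
    obtain ⟨d, hd1, rfl⟩ : ∃ d, 1 ≤ d ∧ a = b + d := ⟨a - b, by omega, by omega⟩
    rw [add_smul] at hab
    have h0 : d • e = 0 := by rwa [add_eq_left] at hab
    exact epos h hd hinf d hd1 h0

/-- multiples of `e` increase. -/
lemma emono (hinf : Infinite G) : ∀ i j : ℕ, 1 ≤ i → i < j → R 0 (i • e) (j • e) := by
  intro i j hi1 hij
  induction j with
  | zero => omega
  | succ k ih =>
    have hstep : R 0 (k • e) ((k+1) • e) := by
      have hk1 : 1 ≤ k := by omega
      exact h.congr3 (addE h hd (epos h hd hinf k hk1)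
        (by rw [← succ_nsmul]; exact epos h hd hinf (k+1) (by omega))) rfl rfl
        (by rw [succ_nsmul])
    rcases Nat.lt_or_ge i k with h1 | h1
    · exact h.trans0 (ih h1) hstep
    · have : i = k := by omega
      subst this
      exact hstep

/-- interval lemma: anything strictly inside `(0, N•e)` is a multiple of `e`. -/
lemma eint (hinf : Infinite G) : ∀ N w, R 0 w (N • e) → ∃ i, 1 ≤ i ∧ i < N ∧ w = i • e := by
  intro N
  induction N with
  | zero =>
    intro w hw
    rw [zero_smul] at hw
    exact absurd rfl (h.ne02 hw)
  | succ M ih =>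
    intro w hw
    rcases Nat.eq_zero_or_pos M with rfl | hM1
    · rw [zero_add, one_smul] at hw
      exact absurd hw (noelt h hd w)
    · by_cases hwM : w = M • e
      · exact ⟨M, hM1, by omega, hwM⟩
      rcases h.total0 (h.ne01 hw) (epos h hd hinf M hM1) hwM with t | t
      · obtain ⟨i, hi1, hiM, hie⟩ := ih w t
        exact ⟨i, hi1, by omega, hie⟩
      · exfalso
        exact nogap h hd (M • e) w (h.congr3 (h.transR t hw) rfl rfl (by rw [succ_nsmul]))

end DiscLemmas

section ChainLemmas
set_option linter.unusedSectionVars false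
set_option maxHeartbeats 1000000

variable {G : Type*} [AddCommGroup G] {R : G → G → G → Prop} {e : G}
variable (h : IsCyclicOrder R)
include h

lemma chainFwd {m : ℕ} {y : ℕ → G} (h0 : y 0 = 0) (hch : RChain R m y) :
    ∀ i, 1 ≤ i → i + 2 ≤ m → R 0 (y i) (y (i + 1)) := by
  have aux : ∀ i, 1 ≤ i → i + 2 ≤ m → R 0 (y i) (y (m - 1)) := by
    intro i
    induction i with
    | zero => omega
    | succ j ih =>
      intro hi1 him
      by_cases hj0 : j = 0
      · subst hj0
        have := hch 0 (by omega)
        rwa [h0] at this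
      · have hprev : R 0 (y j) (y (m - 1)) := ih (by omega) (by omega)
        exact (h.split hprev (hch j (by omega))).2
  intro i hi1 hi2
  rcases Nat.lt_or_ge (i + 2) m with hlt | hge
  · exact (h.split (aux i hi1 (by omega)) (hch i (by omega))).1
  · have hm : m - 1 = i + 1 := by omega
    have := aux i hi1 hi2
    rwa [hm] at this

lemma chainBwd {m : ℕ} {y : ℕ → G} (h0 : y 0 = 0)
    (hincr : ∀ i, 1 ≤ i → i + 2 ≤ m → R 0 (y i) (y (i + 1))) : RChain R m y := by
  have mono : ∀ j i, 1 ≤ i → i < j → j + 1 ≤ m → R 0 (y i) (y j) := by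
    intro j
    induction j with
    | zero => omega
    | succ k ih =>
      intro i hi1 hik hkm
      rcases Nat.lt_or_ge i k with hlt | hge
      · exact h.trans0 (ih i hi1 hlt (by omega)) (hincr k (by omega) (by omega))
      · have : i = k := by omega
        subst this
        exact hincr i hi1 (by omega)
  intro i hi3
  by_cases hi0 : i = 0
  · subst hi0
    rw [h0]
    exact mono (m - 1) 1 le_rfl (by omega) (by omega)
  · exact h.transR (mono (i + 1) i (by omega) (by omega) (by omega))
      (mono (m - 1) (i + 1) (by omega) (by omega) (by omega))

/-- comparison lemma: if `u ⊏ v` and the multiples of `v` up to `n-1` increase,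
then `j•u ⊏ j•v` for `j < n`, and `u ⊏ j•u`. -/
lemma cmpMul (n : ℕ) {u v : G} (huv : R 0 u v)
    (vchain : ∀ j, 1 ≤ j → j + 1 < n → R 0 (j • v) ((j + 1) • v)) :
    ∀ j, 1 ≤ j → j < n → R 0 (j • u) (j • v) ∧ (2 ≤ j → R 0 u (j • u)) := by
  have vmono : ∀ j, 1 ≤ j → j < n → R 0 u (j • v) := by
    intro j
    induction j with
    | zero => omega
    | succ k ih =>
      intro hj1 hjn
      by_cases hk0 : k = 0
      · subst hk0; rw [zero_add, one_smul]; exact huv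
      · exact h.trans0 (ih (by omega) (by omega)) (vchain k (by omega) (by omega))
  intro j
  induction j with
  | zero => omega
  | succ k ih =>
    intro hj1 hjn
    by_cases hk0 : k = 0
    · subst hk0
      refine ⟨by rw [zero_add, one_smul, one_smul]; exact huv, by omega⟩
    · have hk1 : 1 ≤ k := by omega
      obtain ⟨A, _⟩ := ih hk1 (by omega)
      have E : R u ((k+1) • u) (k • v + u) :=
        h.shift u A (zero_add u) (succ_nsmul u k).symm rfl
      have Gg : R (k • v) (k • v + u) ((k+1) • v) :=
        h.shift (k • v) huv (zero_add _) (add_comm u _) (succ_nsmul' v k).symm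
      have hs1 := h.split (vchain k hk1 (by omega)) Gg
      have hu2 : R 0 u (k • v + u) := h.trans0 (vmono k hk1 (by omega)) hs1.1
      have hs2 := h.split hu2 E
      exact ⟨h.trans0 hs2.2 hs1.2, fun _ => hs2.1⟩

end ChainLemmas

section TorsLemmas
set_option linter.unusedSectionVars false
set_option maxHeartbeats 1000000

variable {G : Type*} [AddCommGroup G] {R : G → G → G → Prop} {e : G} {p : ℕ}
variable (h : IsCyclicOrder R) (hd : IsDiscreteCyc R e) (hp : p.Prime)
include h hd hp

/-- a `p`-torsion element has all multiples `i•w ≠ 0` for `1 ≤ i < p`. -/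
lemma torsNonzeroMul {w : G} (hw0 : w ≠ 0) (hpw : p • w = 0) :
    ∀ i, 1 ≤ i → i < p → i • w ≠ 0 := by
  intro i hi1 hip hiw
  apply hw0
  have hnd : ¬ (p ∣ i) := fun hdvd => by
    have := Nat.le_of_dvd (by omega) hdvd; omega
  have hco : Nat.gcd i p = 1 := (Nat.coprime_comm.mp (hp.coprime_iff_not_dvd.mpr hnd))
  have hgcd := Nat.gcd_eq_gcd_ab i p
  rw [hco] at hgcd
  have hz : ((i : ℤ) * Nat.gcdA i p + (p : ℤ) * Nat.gcdB i p) • w = 0 := by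
    rw [add_zsmul, mul_comm (i:ℤ), mul_comm (p:ℤ), mul_zsmul, mul_zsmul,
      natCast_zsmul, natCast_zsmul, hiw, hpw, smul_zero, smul_zero, add_zero]
  calc w = (1 : ℤ) • w := (one_zsmul w).symm
    _ = 0 := by rw [show (1:ℤ) = (i : ℤ) * Nat.gcdA i p + (p : ℤ) * Nat.gcdB i p from by
          exact_mod_cast hgcd, hz]

/-- distinct small multiples of a torsion element are distinct. -/
lemma torsMulNe {w : G} (hw0 : w ≠ 0) (hpw : p • w = 0) :
    ∀ a b, a < b → b ≤ a + (p - 1) → b • w ≠ a • w := by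
  intro a b hab hbp heq
  obtain ⟨d, hd1, rfl⟩ : ∃ d, 1 ≤ d ∧ b = a + d := ⟨b - a, by omega, by omega⟩
  rw [add_smul] at heq
  have : d • w = 0 := by
    have := heq
    rwa [add_comm, add_eq_right] at this
  exact torsNonzeroMul h hd hp hw0 hpw d hd1 (by omega) this

/-- reduction of multiples of torsion elements mod `p`. -/
lemma torsRed {w : G} (hpw : p • w = 0) (m : ℕ) : m • w = (m % p) • w := by
  conv_lhs => rw [← Nat.div_add_mod m p]
  rw [add_smul, mul_comm, mul_smul, hpw, smul_zero, zero_add]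

/-- a torsion element can be replaced by one which is minimal among its multiples. -/
lemma torsMinExists {w : G} (hw0 : w ≠ 0) (hpw : p • w = 0) :
    ∃ w₀ : G, w₀ ≠ 0 ∧ p • w₀ = 0 ∧
      ∀ i, 1 ≤ i → i < p → (i • w₀ ≠ 0 ∧ (w₀ = i • w₀ ∨ R 0 w₀ (i • w₀))) := by
  have hmin : ∀ k, 1 ≤ k → k < p → ∃ i₀, 1 ≤ i₀ ∧ i₀ < p ∧
      ∀ j, 1 ≤ j → j ≤ k → (i₀ • w = j • w ∨ R 0 (i₀ • w) (j • w)) := by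
    intro k
    induction k with
    | zero => omega
    | succ c ih =>
      intro hk1 hkp
      by_cases hc0 : c = 0
      · subst hc0
        exact ⟨1, le_rfl, hp.one_lt, fun j hj1 hj2 => by
          have : j = 1 := by omega
          subst this; exact Or.inl rfl⟩
      · obtain ⟨i₀, hi1, hip, hi⟩ := ih (by omega) (by omega)
        by_cases heq : i₀ • w = (c+1) • w
        · exact ⟨i₀, hi1, hip, fun j hj1 hj2 => by
            rcases Nat.lt_or_ge j (c+1) with hlt | hge
            · exact hi j hj1 (by omega)
            · have : j = c + 1 := by omega
              subst this; exact Or.inl heq⟩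
        rcases h.total0 (torsNonzeroMul h hd hp hw0 hpw i₀ hi1 hip)
            (torsNonzeroMul h hd hp hw0 hpw (c+1) (by omega) hkp) heq with t | t
        · exact ⟨i₀, hi1, hip, fun j hj1 hj2 => by
            rcases Nat.lt_or_ge j (c+1) with hlt | hge
            · exact hi j hj1 (by omega)
            · have : j = c + 1 := by omega
              subst this; exact Or.inr t⟩
        · refine ⟨c + 1, by omega, hkp, fun j hj1 hj2 => ?_⟩
          rcases Nat.lt_or_ge j (c+1) with hlt | hge
          · rcases hi j hj1 (by omega) with heq' | hlt'
            · exact Or.inr (heq' ▸ t)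
            · exact Or.inr (h.trans0 t hlt')
          · have : j = c + 1 := by omega
            subst this; exact Or.inl rfl
  obtain ⟨i₀, hi1, hip, hi⟩ := hmin (p - 1) (by have := hp.one_lt; omega) (by have := hp.two_le; omega)
  refine ⟨i₀ • w, torsNonzeroMul h hd hp hw0 hpw i₀ hi1 hip, ?_, ?_⟩
  · rw [smul_smul, mul_comm, mul_smul, hpw, smul_zero]
  · intro i hi1' hip'
    have hred : i • (i₀ • w) = ((i * i₀) % p) • w := by
      rw [smul_smul]; exact torsRed h hd hp hpw (i * i₀)
    have hr1 : 1 ≤ (i * i₀) % p := by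
      rcases Nat.eq_zero_or_pos ((i * i₀) % p) with h0 | h1
      · exfalso
        have hdvd : p ∣ i * i₀ := Nat.dvd_of_mod_eq_zero h0
        rcases (Nat.Prime.dvd_mul hp).mp hdvd with hh | hh
        · have := Nat.le_of_dvd (by omega) hh; omega
        · have := Nat.le_of_dvd (by omega) hh; omega
      · exact h1
    have hrp : (i * i₀) % p < p := Nat.mod_lt _ (by have := hp.pos; omega)
    constructor
    · rw [hred]
      exact torsNonzeroMul h hd hp hw0 hpw _ hr1 hrp
    · rw [hred]
      exact hi _ hr1 (by omega)

/-- the minimal torsion element has increasing multiples. -/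
lemma torsChain {w₀ : G} (hw0 : w₀ ≠ 0) (hpw : p • w₀ = 0)
    (hmin : ∀ i, 1 ≤ i → i < p → (i • w₀ ≠ 0 ∧ (w₀ = i • w₀ ∨ R 0 w₀ (i • w₀)))) :
    ∀ i, 1 ≤ i → i + 1 < p → R 0 (i • w₀) ((i + 1) • w₀) := by
  intro i hi1 hip
  -- claim: ∀ j ∈ [1, i], j • w₀ ⊏ (i+1) • w₀
  have claim : ∀ j, 1 ≤ j → j ≤ i → R 0 (j • w₀) ((i + 1) • w₀) := by
    intro j
    induction j with
    | zero => omega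
    | succ c ih =>
      intro hj1 hji
      by_cases hc0 : c = 0
      · subst hc0
        rcases (hmin (i+1) (by omega) (by omega)).2 with heq | hlt
        · exfalso
          have h2 : w₀ + i • w₀ = w₀ := by rw [← succ_nsmul', ← heq]
          exact (hmin i hi1 (by omega)).1 (add_eq_left.mp h2)
        · rw [zero_add, one_smul]; exact hlt
      · have hprev : R 0 (c • w₀) ((i + 1) • w₀) := ih (by omega) (by omega)
        have hne : (c + 1) • w₀ ≠ (i + 1) • w₀ :=
          (torsMulNe h hd hp hw0 hpw (c+1) (i+1) (by omega) (by omega)).symm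
        rcases h.total0 (hmin (c+1) (by omega) (by omega)).1
            (hmin (i+1) (by omega) (by omega)).1 hne with t | t
        · exact t
        · exfalso
          have htri : R (c • w₀) ((i+1) • w₀) ((c+1) • w₀) := h.transR hprev t
          obtain ⟨d, hd2, hdi⟩ : ∃ d, 2 ≤ d ∧ i + 1 = c + d := ⟨i + 1 - c, by omega, by omega⟩
          have hsh : R 0 (d • w₀) w₀ := by
            refine h.shift (-(c • w₀)) htri (by abel) ?_ ?_
            · rw [hdi, add_smul]; abel
            · rw [succ_nsmul]; abel
          rcases (hmin d (by omega) (by omega)).2 with heq | hlt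
          · exact h.irrefl0 (by rw [← heq] at hsh; exact hsh)
          · exact h.asymm0 hsh hlt
  exact claim i hi1 le_rfl

end TorsLemmas

section Impl24
set_option linter.unusedSectionVars false
set_option maxHeartbeats 1000000

variable {G : Type*} [AddCommGroup G] {R : G → G → G → Prop} {e : G} {p : ℕ}
variable (h : IsCyclicOrder R) (hd : IsDiscreteCyc R e) (hp : p.Prime) (hinf : Infinite G)
include h hd hp hinf

lemma impl_2_4 {y : G} (hy : p • y = e) : ¬ ∃ g : G, g ≠ 0 ∧ p • g = 0 := by
  rintro ⟨w, hw0, hpw⟩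
  obtain ⟨w₀, hw₀0, hpw₀, hmin⟩ := torsMinExists h hd hp hw0 hpw
  have vchain := torsChain h hd hp hw₀0 hpw₀ hmin
  -- locate y in the arcs of the subgroup generated by w₀
  have hy0 : y ≠ 0 := by
    intro h0
    rw [h0, smul_zero] at hy
    exact hd.1 hy.symm
  have hyne : ∀ i : ℕ, y ≠ i • w₀ := by
    intro i hi
    apply hd.1
    rw [← hy, hi, smul_smul, mul_comm, mul_smul, hpw₀, smul_zero]
  obtain ⟨q, hq⟩ : ∃ q, p = q + 1 := ⟨p - 1, by have := hp.two_le; omega⟩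
  have hq1 : 1 ≤ q := by have := hp.two_le; omega
  have hqw : q • w₀ = -w₀ := by
    have : q • w₀ + w₀ = 0 := by rw [← succ_nsmul, ← hq]; exact hpw₀
    exact eq_neg_of_add_eq_zero_left this
  -- produce δ ≠ 0 with δ ⊏ w₀ and p•δ = e
  have hP : ∃ δ : G, δ ≠ 0 ∧ R 0 δ w₀ ∧ p • δ = e := by
    have hy1 : y ≠ 1 • w₀ := hyne 1
    rw [one_smul] at hy1
    rcases h.total0 hy0 hw₀0 hy1 with t | t
    · exact ⟨y, hy0, t, hy⟩
    · -- w₀ ⊏ y : walk up the multiples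
      have walk : ∀ i, 1 ≤ i → i < p →
          (R 0 (i • w₀) y ∨ ∃ δ : G, δ ≠ 0 ∧ R 0 δ w₀ ∧ p • δ = e) := by
        intro i
        induction i with
        | zero => omega
        | succ c ih =>
          intro hi1 hip
          by_cases hc0 : c = 0
          · subst hc0
            left; rw [zero_add, one_smul]; exact t
          · rcases ih (by omega) (by omega) with hprev | hdone
            · have hne : y ≠ (c+1) • w₀ := hyne (c+1)
              rcases h.total0 hy0 (hmin (c+1) (by omega) hip).1 hne with t2 | t2
              · right
                have htri : R (c • w₀) y ((c+1) • w₀) := h.transR hprev t2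
                have hsh : R 0 (y - c • w₀) w₀ := by
                  refine h.shift (-(c • w₀)) htri (by abel) (by abel) ?_
                  rw [succ_nsmul]; abel
                refine ⟨y - c • w₀, h.ne01 hsh, hsh, ?_⟩
                rw [smul_sub, hy, smul_smul, mul_comm, mul_smul, hpw₀, smul_zero, sub_zero]
              · left; exact t2
            · right; exact hdone
      rcases walk q hq1 (by omega) with hlast | hdone
      · -- y is beyond (p-1)•w₀ = -w₀ : wrap around
        rw [hqw] at hlast
        have hsh : R 0 (y + w₀) w₀ := by
          refine h.shift w₀ (h.cyc _ _ _ hlast) (by abel) (by abel) (by abel)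
        refine ⟨y + w₀, h.ne01 hsh, hsh, ?_⟩
        rw [smul_add, hy, hpw₀, add_zero]
      · exact hdone
  obtain ⟨δ, hδ0, hδw, hpδ⟩ := hP
  -- compare multiples of δ with multiples of w₀
  have cm := cmpMul h p hδw vchain q hq1 (by omega)
  have hqδw : R 0 (q • δ) (-w₀) := by rw [← hqw]; exact cm.1
  have hneg : R 0 (-w₀) (-δ) := h.neg0 hδw
  have htr : R 0 (q • δ) (-δ) := h.trans0 hqδw hneg
  have hnw : R 0 (q • δ) (q • δ + δ) := h.nowrap htr hδ0
  have hfin : R 0 (q • δ) e := by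
    have : q • δ + δ = e := by rw [← succ_nsmul, ← hq]; exact hpδ
    rwa [this] at hnw
  by_cases hq2 : q = 1
  · subst hq2
    rw [one_smul] at hfin
    exact noelt h hd δ hfin
  · exact noelt h hd δ (h.trans0 (cm.2 (by omega)) hfin)

end Impl24

section Impl43
set_option linter.unusedSectionVars false
set_option maxHeartbeats 1000000

variable {G : Type*} [AddCommGroup G] {R : G → G → G → Prop} {e : G} {p : ℕ}
variable (h : IsCyclicOrder R) (hd : IsDiscreteCyc R e) (hp : p.Prime) (hinf : Infinite G)
include h hd hp hinf

lemma impl_4_3 (hc : ∀ n : ℕ, 2 ≤ n → CNRegular R n)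
    (hnt : ¬ ∃ g : G, g ≠ 0 ∧ p • g = 0) :
    ∃ k : ℕ, k < p ∧ k ≠ 0 ∧ Dform R e p k := by
  obtain ⟨q, hq⟩ : ∃ q, p = q + 1 := ⟨p - 1, by have := hp.two_le; omega⟩
  have hq1 : 1 ≤ q := by have := hp.two_le; omega
  have hp2 : 2 ≤ p := hp.two_le
  set xf : ℕ → G := fun i => -((p + 1 - i) • e) with hxf
  have hxf1 : xf 1 = -(p • e) := by simp only [hxf, Nat.add_sub_cancel]
  have hxfp : xf p = -e := by
    simp only [hxf]
    have h1 : p + 1 - p = 1 := by omega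
    rw [h1, one_smul]
  -- the wrapped chain hypothesis
  have hch : RChain R (p + 1) (fun i => if i = 0 then 0 else xf i) := by
    apply chainBwd h (by simp)
    intro i hi1 hi2
    rw [if_neg (by omega : ¬ i = 0), if_neg (by omega : ¬ i + 1 = 0)]
    obtain ⟨c, hc1, hceq⟩ : ∃ c, 1 ≤ c ∧ p + 1 - i = c + 1 := ⟨p - i, by omega, by omega⟩
    have hceq' : p + 1 - (i + 1) = c := by omega
    have ha : -((c+1) • e) ≠ 0 := fun hh => epos h hd hinf (c+1) (by omega) (neg_eq_zero.mp hh)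
    have hae : -((c+1) • e) + e ≠ 0 := by
      intro hh
      apply epos h hd hinf c hc1
      have h2 : -(c • e) = -((c+1) • e) + e := by rw [succ_nsmul]; abel
      rw [← neg_eq_zero, h2, hh]
    have h4 := addE h hd ha hae
    have h3 : -((c+1) • e) + e = -(c • e) := by rw [succ_nsmul]; abel
    rw [h3] at h4
    simp only [hxf, hceq, hceq']
    exact h4
  obtain ⟨g, hwin, hchg⟩ := hc p hp2 xf hch
  -- extract the increasing chain for g
  have hf0 : (fun i => if i = p then xf p else i • g) 0 = 0 := by
    simp only
    rw [if_neg (by omega : ¬ (0:ℕ) = p), zero_smul]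
  have hpair := chainFwd h hf0 hchg
  have gchain : ∀ j, 1 ≤ j → j + 1 ≤ q → R 0 (j • g) ((j + 1) • g) := by
    intro j hj1 hj2
    have h1 := hpair j hj1 (by omega)
    rwa [if_neg (by omega : ¬ j = p), if_neg (by omega : ¬ j + 1 = p)] at h1
  have glast : R 0 (q • g) (-e) := by
    have h1 := hpair q hq1 (by omega)
    rwa [if_neg (by omega : ¬ q = p), if_pos (by omega : q + 1 = p), hxfp] at h1
  -- g ≠ -e
  have hgne : g ≠ -e := by
    intro hh
    by_cases hp3 : p = 2
    · have h1 := hpair 1 le_rfl (by omega)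
      rw [if_neg (by omega : ¬ (1:ℕ) = p), if_pos (by omega : 1 + 1 = p), hxfp, hh] at h1
      exact h.ne12 h1 (by rw [one_smul])
    · have h1 := hpair 1 le_rfl (by omega)
      rw [if_neg (by omega : ¬ (1:ℕ) = p), if_neg (by omega : ¬ 1 + 1 = p), hh] at h1
      have h2 : R 0 (-e) (-(2 • e)) := by
        refine h.congr3 h1 rfl (by rw [one_smul]) ?_
        rw [smul_neg]
      have h3 : R 0 (-(2 • e)) (-(1 • e)) := h.neg0 (emono h hd hinf 1 2 le_rfl one_lt_two)
      rw [one_smul] at h3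
      exact h.asymm0 h2 h3
  -- the window gives p•g + p•e = i•e with 1 ≤ i ≤ q
  obtain ⟨i, hi1, hiq, hkey⟩ : ∃ i, 1 ≤ i ∧ i ≤ q ∧ p • g + p • e = i • e := by
    rcases hwin with h1 | h1 | h1
    · -- p•g = -(p•e) : torsion, contradiction
      exfalso
      rw [hxf1] at h1
      refine hnt ⟨g + e, fun hh => hgne (eq_neg_of_add_eq_zero_left hh), ?_⟩
      rw [smul_add, h1]; abel
    · rw [hxfp] at h1
      refine ⟨q, hq1, le_rfl, ?_⟩
      rw [h1, hq, succ_nsmul]; abel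
    · rw [hxf1, hxfp] at h1
      have h2 : R 0 (p • g + p • e) (q • e) := by
        refine h.shift (p • e) h1 (by abel) rfl ?_
        rw [hq, succ_nsmul]; abel
      obtain ⟨i, hi1, hiq, hie⟩ := eint h hd hinf q _ h2
      exact ⟨i, hi1, by omega, hie⟩
  have hpg : p • g = i • e - p • e := by rw [← hkey]; abel
  -- master nonvanishing lemma
  have habs : ∀ j N₁ N₂ : ℕ, 1 ≤ j → j ≤ q → j • g + N₁ • e ≠ N₂ • e := by
    intro j N₁ N₂ hj1 hjq heq
    have e1 : (p * j) • g + (p * N₁) • e = (p * N₂) • e := by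
      have := congrArg (fun z => p • z) heq
      rwa [smul_add, smul_smul, smul_smul, smul_smul] at this
    have h1 : (p * j) • g = (j * i) • e - (j * p) • e := by
      rw [mul_comm, mul_smul, hpg, smul_sub, smul_smul, smul_smul]
    rw [h1] at e1
    have e2 : (j * i + p * N₁) • e = (j * p + p * N₂) • e := by
      rw [add_smul, add_smul]
      calc (j*i) • e + (p*N₁) • e
          = ((j*i) • e - (j*p) • e + (p*N₁) • e) + (j*p) • e := by abel
        _ = (p*N₂) • e + (j*p) • e := by rw [e1]
        _ = (j*p) • e + (p*N₂) • e := by abel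
    have hcan : j * i + p * N₁ = j * p + p * N₂ := ecancel h hd hinf e2
    have hmod : (j * i) % p = 0 := by
      rw [← Nat.add_mul_mod_self_left (j*i) p N₁, hcan,
        show j*p + p*N₂ = p*(j + N₂) from by ring, Nat.mul_mod_right]
    rcases (Nat.Prime.dvd_mul hp).mp (Nat.dvd_of_mod_eq_zero hmod) with hh | hh
    · have := Nat.le_of_dvd (by omega) hh; omega
    · have := Nat.le_of_dvd (by omega) hh; omega
  have hA : ∀ j N : ℕ, 1 ≤ j → j ≤ q → j • g + N • e ≠ 0 := by
    intro j N hj1 hjq heq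
    exact habs j N 0 hj1 hjq (by rw [heq, zero_smul])
  have hB : ∀ N : ℕ, g ≠ N • e := by
    intro N heq
    exact habs 1 0 N le_rfl hq1 (by rw [one_smul, zero_smul, add_zero, heq])
  -- ladder lemma
  have hlad : ∀ j N : ℕ, 1 ≤ j → j ≤ q → 1 ≤ N → R 0 (j • g) (j • g + N • e) := by
    intro j N hj1 hjq
    induction N with
    | zero => omega
    | succ M ih =>
      intro _
      by_cases hM0 : M = 0
      · subst hM0
        have h1 := addE h hd (by
            have := hA j 0 hj1 hjq
            rwa [zero_smul, add_zero] at this)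
          (by have := hA j 1 hj1 hjq; rwa [one_smul] at this)
        refine h.congr3 h1 rfl rfl ?_
        rw [zero_add, one_smul]
      · have hprev := ih (by omega)
        have h1 := addE h hd (hA j M hj1 hjq) (by
          have := hA j (M+1) hj1 hjq
          rwa [succ_nsmul, ← add_assoc] at this)
        have h2 : R 0 (j • g + M • e) (j • g + (M+1) • e) :=
          h.congr3 h1 rfl rfl (by rw [succ_nsmul]; abel)
        exact h.trans0 hprev h2
  -- interleaving
  have hI : ∀ j, 1 ≤ j → j + 1 ≤ q → R 0 (j • g + j • e) ((j+1) • g) := by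
    intro j hj1 hjq
    have hne : j • g + j • e ≠ (j+1) • g := by
      intro hh
      apply hB j
      have h2 : (j+1) • g = j • g + g := succ_nsmul g j
      rw [h2] at hh
      exact (add_left_cancel hh).symm
    have hnz1 : j • g + j • e ≠ 0 := hA j j hj1 (by omega)
    have hnz2 : (j+1) • g ≠ 0 := by
      have := hA (j+1) 0 (by omega) hjq
      rwa [zero_smul, add_zero] at this
    rcases h.total0 hnz1 hnz2 hne with t | t
    · exact t
    · exfalso
      have htri : R (j • g) ((j+1) • g) (j • g + j • e) := h.transR (gchain j hj1 hjq) t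
      have hsh : R 0 g (j • e) := by
        refine h.shift (-(j • g)) htri (by abel) ?_ (by abel)
        rw [succ_nsmul]; abel
      obtain ⟨m, hm1, hmj, hme⟩ := eint h hd hinf j g hsh
      exact hB m hme
  -- the witness x = g + e has an increasing chain
  refine ⟨i, by omega, by omega, g + e, ?_, ?_⟩
  · apply chainBwd h (by rw [zero_smul])
    intro j hj1 hj2
    have hx1 : j • (g + e) = j • g + j • e := smul_add _ _ _
    have hx2 : (j+1) • (g + e) = (j+1) • g + (j+1) • e := smul_add _ _ _
    rw [hx1, hx2]
    have hstep1 : R 0 (j • g + j • e) ((j+1) • g) := hI j hj1 (by omega)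
    have hstep2 : R 0 ((j+1) • g) ((j+1) • g + (j+1) • e) :=
      hlad (j+1) (j+1) (by omega) (by omega) (by omega)
    exact h.trans0 hstep1 hstep2
  · rw [smul_add]; exact hkey

end Impl43

section Impl31
set_option linter.unusedSectionVars false
set_option maxHeartbeats 1000000

variable {G : Type*} [AddCommGroup G] {R : G → G → G → Prop} {e : G} {p : ℕ}
variable (h : IsCyclicOrder R) (hd : IsDiscreteCyc R e) (hp : p.Prime) (hinf : Infinite G)
include h hd hp hinf

lemma impl_3_1 (hc : ∀ n : ℕ, 2 ≤ n → CNRegular R n)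
    (h3 : ∃ k : ℕ, k < p ∧ k ≠ 0 ∧ Dform R e p k) :
    ∀ x : G, ∃ y : G, p • y = x := by
  obtain ⟨k, hkp, hk0, x', _, hpx⟩ := h3
  obtain ⟨q, hq⟩ : ∃ q, p = q + 1 := ⟨p - 1, by have := hp.two_le; omega⟩
  have hq1 : 1 ≤ q := by have := hp.two_le; omega
  -- Bezout: e is divisible by p
  obtain ⟨y, hpy⟩ : ∃ y : G, p • y = e := by
    have hnd : ¬ (p ∣ k) := fun hdvd => by
      have := Nat.le_of_dvd (by omega) hdvd; omega
    have hco : Nat.gcd k p = 1 := Nat.coprime_comm.mp (hp.coprime_iff_not_dvd.mpr hnd)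
    have hgcd := Nat.gcd_eq_gcd_ab k p
    rw [hco] at hgcd
    refine ⟨Nat.gcdA k p • x' + Nat.gcdB k p • e, ?_⟩
    have hz : (p : ℤ) • ((Nat.gcdA k p) • x' + (Nat.gcdB k p) • e) = e := by
      rw [smul_add, smul_comm (p:ℤ), smul_comm (p:ℤ), natCast_zsmul, natCast_zsmul, hpx]
      rw [show (k • e : G) = (k : ℤ) • e from (natCast_zsmul e k).symm,
        show (p • e : G) = (p : ℤ) • e from (natCast_zsmul e p).symm,
        smul_smul, smul_smul, ← add_smul]
      rw [show Nat.gcdA k p * (k:ℤ) + Nat.gcdB k p * (p:ℤ)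
          = (k:ℤ) * Nat.gcdA k p + (p:ℤ) * Nat.gcdB k p from by ring, ← hgcd]
      exact_mod_cast one_zsmul e
    rw [← natCast_zsmul]
    exact hz
  -- division with remainder via regularity
  intro x₀
  by_cases hmul : ∃ i, i < p ∧ x₀ = i • e
  · obtain ⟨i, _, rfl⟩ := hmul
    exact ⟨i • y, by rw [smul_smul, mul_comm, mul_smul, hpy]⟩
  push_neg at hmul
  set xg : ℕ → G := fun i => x₀ - (p - i) • e with hxg
  have hch : RChain R (p + 1) (fun i => if i = 0 then 0 else xg i) := by
    apply chainBwd h (by simp)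
    intro i hi1 hi2
    rw [if_neg (by omega : ¬ i = 0), if_neg (by omega : ¬ i + 1 = 0)]
    obtain ⟨c, hceq⟩ : ∃ c, p - i = c + 1 := ⟨p - i - 1, by omega⟩
    have hceq' : p - (i + 1) = c := by omega
    have ha : x₀ - (c+1) • e ≠ 0 := by
      intro hh
      exact hmul (c+1) (by omega) (by rwa [sub_eq_zero] at hh)
    have hae : x₀ - (c+1) • e + e ≠ 0 := by
      intro hh
      refine hmul c (by omega) ?_
      have : x₀ - c • e = x₀ - (c+1) • e + e := by rw [succ_nsmul]; abel
      rw [← sub_eq_zero, this, hh]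
    have h4 := addE h hd ha hae
    have h3' : x₀ - (c+1) • e + e = x₀ - c • e := by rw [succ_nsmul]; abel
    rw [h3'] at h4
    simp only [hxg, hceq, hceq']
    exact h4
  obtain ⟨g, hwin, _⟩ := hc p hp.two_le xg hch
  have hxg1 : xg 1 = x₀ - q • e := by
    simp only [hxg]
    congr 2
    omega
  have hxgp : xg p = x₀ := by
    simp only [hxg]
    rw [Nat.sub_self, zero_smul, sub_zero]
  rcases hwin with h1 | h1 | h1
  · rw [hxg1] at h1
    refine ⟨g + q • y, ?_⟩
    rw [smul_add, h1, smul_smul, mul_comm, mul_smul, hpy]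
    abel
  · rw [hxgp] at h1
    exact ⟨g, h1⟩
  · rw [hxg1, hxgp] at h1
    have h2 : R 0 (p • g + (q • e - x₀)) (q • e) := by
      refine h.shift (q • e - x₀) h1 (by abel) rfl (by abel)
    obtain ⟨m, hm1, hmq, hme⟩ := eint h hd hinf q _ h2
    obtain ⟨s, hs⟩ : ∃ s, q = s + m := ⟨q - m, by omega⟩
    refine ⟨g + s • y, ?_⟩
    rw [smul_add, smul_smul, mul_comm, mul_smul, hpy]
    have hx : x₀ = p • g + q • e - m • e := by rw [← hme]; abel
    rw [hx, hs, add_smul]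
    abel

end Impl31

/-- For an infinite discrete c-regular cyclically ordered abelian group `G` and a
prime `p`, the following are equivalent: (1) `G` is `p`-divisible; (2) `1_G` is
`p`-divisible; (3) the unique `k < p` for which `D_{p,k}` holds is nonzero;
(4) `G` has no element of order `p`. -/
theorem discrete_cregular_pdivisible_tfae (G : Type*) [AddCommGroup G]
    (R : G → G → G → Prop) (h : IsCyclicOrder R) (e : G) (hd : IsDiscreteCyc R e)
    (hc : ∀ n : ℕ, 2 ≤ n → CNRegular R n) (hinf : Infinite G)
    (p : ℕ) (hp : p.Prime) :
    List.TFAE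
      [ ∀ x : G, ∃ y : G, p • y = x,
        ∃ y : G, p • y = e,
        ∃ k : ℕ, k < p ∧ k ≠ 0 ∧ Dform R e p k,
        ¬ ∃ g : G, g ≠ 0 ∧ p • g = 0 ] := by
  tfae_have 1 → 2 := fun h1 => h1 e
  tfae_have 2 → 4 := fun ⟨y, hy⟩ => impl_2_4 h hd hp hinf hy
  tfae_have 4 → 3 := impl_4_3 h hd hp hinf hc
  tfae_have 3 → 1 := impl_3_1 h hd hp hinf hc
  tfae_finish
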